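/- With notation as above, let H be a connected graph on h vertices with rooted spanning tree T rooted at o, let i_T be the number of internal vertices of T, let G be a graph on n vertices, and suppose E[D^{h−1} 1[D ≥ Δ]] ≤ λ where D is the degree of a uniformly random vertex of G. Then E[X̄(v*)] ≤ n^{−1} emb(H,G) ≤ E[X̄(v*)] + i_T λ, where v* is a uniformly random vertex of G and emb(H,G) is the number of embeddings of H into G. -/

import Mathlib

open Finset SimpleGraph
open scoped Classical

private lemma walk_cross {V : Type*} (T : SimpleGraph V) (s : Finset V) :
    ∀ {x y : V}, T.Walk x y → x ∈ s → y ∉ s →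
      ∃ a ∈ s, ∃ b, b ∉ s ∧ T.Adj a b := by
  intro x y w
  induction w with
  | nil => exact fun hx hy => absurd hx hy
  | @cons x c y hadj p ih =>
      intro hx hy
      by_cases hc : c ∈ s
      · exact ih hc hy
      · exact ⟨x, hx, c, hc, hadj⟩

private noncomputable def Acyl {VH VG : Type*} [Fintype VH] [Fintype VG]
    (T : SimpleGraph VH) (G : SimpleGraph VG) (u : VH) (v : VG) (D : ℕ)
    (s : Finset VH) : Finset (VH → VG) :=
  Finset.univ.filter (fun σ : VH → VG => σ u = v ∧
    (∀ a ∈ s, ∀ b ∈ s, T.Adj a b → G.Adj (σ a) (σ b)) ∧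
    ∀ y ∈ s, 1 < T.degree y → G.degree (σ y) ≤ D)

private lemma mem_Acyl {VH VG : Type*} [Fintype VH] [Fintype VG]
    {T : SimpleGraph VH} {G : SimpleGraph VG} {u : VH} {v : VG} {D : ℕ}
    {s : Finset VH} {σ : VH → VG} :
    σ ∈ Acyl T G u v D s ↔ σ u = v ∧
      (∀ a ∈ s, ∀ b ∈ s, T.Adj a b → G.Adj (σ a) (σ b)) ∧
      ∀ y ∈ s, 1 < T.degree y → G.degree (σ y) ≤ D := by
  simp [Acyl]

private lemma Acyl_bound {VH VG : Type*} [Fintype VH] [Fintype VG] [Nonempty VG]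
    (T : SimpleGraph VH) (G : SimpleGraph VG) (hconn : T.Connected)
    (u : VH) (v : VG) (D : ℕ) (hD : G.degree v ≤ D) :
    ∀ j : ℕ, j + 1 ≤ Fintype.card VH →
      ∃ s : Finset VH, u ∈ s ∧ s.card = j + 1 ∧
        (∀ a ∈ s, a ≠ u → ∃ c ∈ s, T.Adj c a) ∧
        (Acyl T G u v D s).card
          ≤ D ^ j * (Fintype.card VG) ^ (Fintype.card VH - 1 - j) := by
  intro j
  induction j with
  | zero =>
      intro _
      refine ⟨{u}, mem_singleton_self u, card_singleton u, ?_, ?_⟩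
      · intro a ha hne; exact absurd (mem_singleton.mp ha) hne
      · have hsub : Acyl T G u v D {u} ⊆ univ.filter (fun σ : VH → VG => σ u = v) := by
          intro σ hσ
          simp only [mem_filter, mem_univ, true_and]
          exact (mem_Acyl.mp hσ).1
        have hcard1 : (univ.filter (fun σ : VH → VG => σ u = v)).card
            ≤ Fintype.card ({x : VH // x ≠ u} → VG) := by
          rw [← Finset.card_univ]
          apply Finset.card_le_card_of_injOn (fun σ => fun x : {x : VH // x ≠ u} => σ x.1)
          · intro σ _; exact mem_univ _
          · intro σ hσ σ' hσ' hee
            simp only [Finset.mem_coe, Finset.mem_filter, mem_univ, true_and] at hσ hσ'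
            funext x
            by_cases hx : x = u
            · rw [hx, hσ, hσ']
            · exact congrFun hee ⟨x, hx⟩
        have hcard2 : Fintype.card ({x : VH // x ≠ u} → VG)
            = Fintype.card VG ^ (Fintype.card VH - 1) := by
          rw [Fintype.card_fun]
          congr 1
          rw [Fintype.card_subtype_compl, Fintype.card_subtype_eq]
        calc (Acyl T G u v D {u}).card
            ≤ (univ.filter (fun σ : VH → VG => σ u = v)).card := Finset.card_le_card hsub
          _ ≤ Fintype.card ({x : VH // x ≠ u} → VG) := hcard1
          _ = Fintype.card VG ^ (Fintype.card VH - 1) := hcard2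
          _ = D ^ 0 * Fintype.card VG ^ (Fintype.card VH - 1 - 0) := by simp
  | succ j ih =>
      intro hj1
      obtain ⟨s, hus, hcards, hinv, hbound⟩ := ih (by omega)
      have hne_univ : s ≠ univ := by
        intro hcontr
        rw [hcontr, card_univ] at hcards
        omega
      obtain ⟨b₀, _, hb₀⟩ := Finset.exists_of_ssubset (Finset.ssubset_univ_iff.mpr hne_univ)
      obtain ⟨w⟩ := hconn.preconnected u b₀
      obtain ⟨a, has, b, hbs, hadj⟩ := walk_cross T s w hus hb₀
      refine ⟨insert b s, mem_insert_of_mem hus, ?_, ?_, ?_⟩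
      · rw [card_insert_of_notMem hbs, hcards]
      · intro a' ha' hne
        rcases mem_insert.mp ha' with rfl | ha's
        · exact ⟨a, mem_insert_of_mem has, hadj⟩
        · obtain ⟨c, hcs, hc⟩ := hinv a' ha's hne
          exact ⟨c, mem_insert_of_mem hcs, hc⟩
      · set m := Fintype.card VG with hm
        have hm0 : 0 < m := Fintype.card_pos
        obtain ⟨w₀⟩ := ‹Nonempty VG›
        set t := (Acyl T G u v D s).filter (fun τ => τ b = w₀) with ht
        have hns : ∀ {z : VH}, z ∈ s → z ≠ b := by
          intro z hz hzb
          subst hzb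
          exact hbs hz
        have hub : u ≠ b := hns hus
        have hab : a ≠ b := hns has
        have hdeg_a : ∀ τ ∈ Acyl T G u v D s, G.degree (τ a) ≤ D := by
          intro τ hτ
          obtain ⟨hτu, hτadj, hτdeg⟩ := mem_Acyl.mp hτ
          by_cases hau : a = u
          · rw [hau, hτu]; exact hD
          · obtain ⟨c, hcs, hc⟩ := hinv a has hau
            have hbc : b ≠ c := fun hcon => (hns hcs) hcon.symm
            have hdegT : 1 < T.degree a := by
              have hsub : ({b, c} : Finset VH) ⊆ T.neighborFinset a := by
                intro z hz
                rw [SimpleGraph.mem_neighborFinset]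
                rcases Finset.mem_insert.mp hz with rfl | hz
                · exact hadj
                · rw [Finset.mem_singleton.mp hz]; exact hc.symm
              calc 1 < 2 := one_lt_two
                _ = ({b, c} : Finset VH).card := (Finset.card_pair hbc).symm
                _ ≤ (T.neighborFinset a).card := Finset.card_le_card hsub
                _ = T.degree a := T.card_neighborFinset_eq_degree a
            exact hτdeg a has hdegT
        have step1 : (Acyl T G u v D (insert b s)).card ≤ t.card * D := by
          have hmem : ∀ σ ∈ Acyl T G u v D (insert b s), Function.update σ b w₀ ∈ t := by
            intro σ hσ
            obtain ⟨hσu, hσadj, hσdeg⟩ := mem_Acyl.mp hσ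
            rw [ht, mem_filter]
            refine ⟨mem_Acyl.mpr ⟨?_, ?_, ?_⟩, Function.update_self _ _ _⟩
            · rw [Function.update_of_ne hub]; exact hσu
            · intro a' ha' b' hb' hadj'
              have ha'b : a' ≠ b := hns ha'
              have hb'b : b' ≠ b := hns hb'
              rw [Function.update_of_ne ha'b, Function.update_of_ne hb'b]
              exact hσadj a' (mem_insert_of_mem ha') b' (mem_insert_of_mem hb') hadj'
            · intro y hy hdy
              rw [Function.update_of_ne (hns hy)]
              exact hσdeg y (mem_insert_of_mem hy) hdy
          rw [Finset.card_eq_sum_card_fiberwise hmem]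
          refine le_trans (Finset.sum_le_card_nsmul _ _ D ?_) (by simp [smul_eq_mul])
          intro τ hτ
          have hτA : τ ∈ Acyl T G u v D s := (mem_filter.mp hτ).1
          have hfib : ((Acyl T G u v D (insert b s)).filter
              (fun σ => Function.update σ b w₀ = τ)).card
                ≤ (G.neighborFinset (τ a)).card := by
            apply Finset.card_le_card_of_injOn (fun σ => σ b)
            · intro σ hσ
              obtain ⟨hσA, hστ⟩ := mem_filter.mp hσ
              obtain ⟨hσu, hσadj, hσdeg⟩ := mem_Acyl.mp hσA
              rw [Finset.mem_coe, SimpleGraph.mem_neighborFinset]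
              have hτa : τ a = σ a := by
                rw [← hστ, Function.update_of_ne hab]
              rw [hτa]
              exact hσadj a (mem_insert_of_mem has) b (mem_insert_self b s) hadj
            · intro σ hσ σ' hσ' heq
              simp only [Finset.mem_coe, Finset.mem_filter] at hσ hσ'
              funext x
              by_cases hx : x = b
              · rw [hx]; exact heq
              · have h1 := congrFun hσ.2 x
                have h2 := congrFun hσ'.2 x
                simp only [Function.update_of_ne hx] at h1 h2
                rw [h1, h2]
          calc ((Acyl T G u v D (insert b s)).filter
              (fun σ => Function.update σ b w₀ = τ)).card
              ≤ (G.neighborFinset (τ a)).card := hfib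
            _ = G.degree (τ a) := G.card_neighborFinset_eq_degree (τ a)
            _ ≤ D := hdeg_a τ hτA
        have step2 : t.card * m ≤ (Acyl T G u v D s).card := by
          have hcardp : t.card * m = (t ×ˢ (univ : Finset VG)).card := by
            rw [Finset.card_product, Finset.card_univ]
          rw [hcardp]
          apply Finset.card_le_card_of_injOn (fun p => Function.update p.1 b p.2)
          · rintro ⟨τ, w⟩ hp
            have hτ : τ ∈ t := (Finset.mem_product.mp hp).1
            have hτA : τ ∈ Acyl T G u v D s := (mem_filter.mp hτ).1
            obtain ⟨hτu, hτadj, hτdeg⟩ := mem_Acyl.mp hτA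
            apply mem_Acyl.mpr
            refine ⟨?_, ?_, ?_⟩
            · dsimp only; rw [Function.update_of_ne hub]; exact hτu
            · intro a' ha' b' hb' hadj'
              dsimp only; rw [Function.update_of_ne (hns ha'), Function.update_of_ne (hns hb')]
              exact hτadj a' ha' b' hb' hadj'
            · intro y hy hdy
              convert hτdeg y hy hdy using 2
              exact Function.update_of_ne (hns hy) _ _
          · rintro ⟨τ, w⟩ hp ⟨τ', w'⟩ hp' heq
            simp only [Finset.mem_coe, Finset.mem_product] at hp hp'
            have hτb : τ b = w₀ := (mem_filter.mp hp.1).2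
            have hτ'b : τ' b = w₀ := (mem_filter.mp hp'.1).2
            have h1 : w = w' := by
              have := congrFun heq b
              simpa [Function.update_self] using this
            have h2 : τ = τ' := by
              funext x
              by_cases hx : x = b
              · rw [hx, hτb, hτ'b]
              · have h3 := congrFun heq x
                simp only [Function.update_of_ne hx] at h3
                exact h3
            rw [Prod.mk.injEq]
            exact ⟨h2, h1⟩
        have hfinal : (Acyl T G u v D (insert b s)).card * m
            ≤ (D ^ (j+1) * m ^ (Fintype.card VH - 1 - (j+1))) * m := by
          calc (Acyl T G u v D (insert b s)).card * m
              ≤ (t.card * D) * m := Nat.mul_le_mul_right _ step1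
            _ = (t.card * m) * D := by ring
            _ ≤ (Acyl T G u v D s).card * D := Nat.mul_le_mul_right _ step2
            _ ≤ (D ^ j * m ^ (Fintype.card VH - 1 - j)) * D :=
                Nat.mul_le_mul_right _ hbound
            _ = (D ^ (j+1) * m ^ (Fintype.card VH - 1 - (j+1))) * m := by
                have hexp : Fintype.card VH - 1 - j
                    = (Fintype.card VH - 1 - (j+1)) + 1 := by omega
                rw [hexp]; ring
        exact Nat.le_of_mul_le_mul_right hfinal hm0

private lemma tree_count {VH VG : Type*} [Fintype VH] [Fintype VG]
    (T : SimpleGraph VH) (G : SimpleGraph VG) (hconn : T.Connected)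
    (u : VH) (v : VG) (D : ℕ) (hD : G.degree v ≤ D) :
    (Finset.univ.filter (fun σ : VH → VG => σ u = v ∧
        (∀ a b, T.Adj a b → G.Adj (σ a) (σ b)) ∧
        ∀ y, 1 < T.degree y → G.degree (σ y) ≤ D)).card
      ≤ D ^ (Fintype.card VH - 1) := by
  have hVH : Nonempty VH := hconn.nonempty
  have h1 : 1 ≤ Fintype.card VH := Fintype.card_pos
  cases isEmpty_or_nonempty VG with
  | inl hemp =>
      have hE : IsEmpty (VH → VG) := ⟨fun σ => hemp.elim (σ (Classical.arbitrary VH))⟩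
      have : (univ : Finset (VH → VG)) = ∅ := Finset.univ_eq_empty
      rw [this, Finset.filter_empty, Finset.card_empty]
      exact Nat.zero_le _
  | inr hne =>
      obtain ⟨s, hus, hcards, _, hbound⟩ :=
        Acyl_bound T G hconn u v D hD (Fintype.card VH - 1) (by omega)
      have hsu : s = univ := Finset.eq_univ_of_card s (by rw [hcards]; omega)
      rw [hsu] at hbound
      have hsub : (Finset.univ.filter (fun σ : VH → VG => σ u = v ∧
          (∀ a b, T.Adj a b → G.Adj (σ a) (σ b)) ∧
          ∀ y, 1 < T.degree y → G.degree (σ y) ≤ D)) ⊆ Acyl T G u v D univ := by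
        intro σ hσ
        simp only [mem_filter, mem_univ, true_and] at hσ
        exact mem_Acyl.mpr ⟨hσ.1, fun a _ b _ hab => hσ.2.1 a b hab, fun y _ => hσ.2.2 y⟩
      calc _ ≤ (Acyl T G u v D univ).card := Finset.card_le_card hsub
        _ ≤ D ^ (Fintype.card VH - 1)
              * (Fintype.card VG) ^ (Fintype.card VH - 1 - (Fintype.card VH - 1)) := hbound
        _ = D ^ (Fintype.card VH - 1) := by simp

/-- Sandwich bound for the truncated estimator: with `T` a spanning tree of `H`
rooted at `o`, `i_T` the number of internal vertices of `T`, and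
`E[D^(h-1) 1[D ≥ Δ]] ≤ λ` for the degree `D` of a uniform random vertex of `G`,
we have `E[X̄(v*)] ≤ emb(H,G)/n ≤ E[X̄(v*)] + i_T λ`. -/
theorem truncated_estimator_sandwich
    {VH VG : Type*} [Fintype VH] [Fintype VG]
    (H : SimpleGraph VH) (G : SimpleGraph VG) (o : VH)
    (h n : ℕ) (hcard : Fintype.card VH = h) (hn : Fintype.card VG = n)
    (hn1 : 1 ≤ n) (hconn : H.Connected)
    (T : SimpleGraph VH) (hTle : T ≤ H) (hTtree : T.IsTree)
    (Δ : ℕ) (hΔ : 0 < Δ) (lam : ℝ)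
    (hexp : (∑ v : VG, if Δ ≤ G.degree v then (G.degree v : ℝ) ^ (h - 1) else 0) / n
              ≤ lam)
    -- `X̄(v)`: truncated embedding count rooted at `v`
    (Xbar : VG → ℕ)
    (hXbar : ∀ v : VG, Xbar v =
      (Finset.univ.filter
        (fun σ : VH → VG =>
          (∀ a b, H.Adj a b → G.Adj (σ a) (σ b)) ∧ Function.Injective σ ∧
          σ o = v ∧
          ∀ u : VH, (1 < T.degree u ∨ u = o) → G.degree (σ u) < Δ)).card)
    -- `i_T`: number of internal vertices of `T`
    (iT : ℕ)
    (hiT : iT = (Finset.univ.filter (fun u : VH => 1 < T.degree u ∨ u = o)).card)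
    -- `emb(H,G)`: number of embeddings of `H` into `G`
    (emb : ℕ)
    (hemb : emb = (Finset.univ.filter
      (fun σ : VH → VG =>
        (∀ a b, H.Adj a b → G.Adj (σ a) (σ b)) ∧ Function.Injective σ)).card) :
    (∑ v : VG, (Xbar v : ℝ)) / n ≤ (emb : ℝ) / n ∧
    (emb : ℝ) / n ≤ (∑ v : VG, (Xbar v : ℝ)) / n + iT * lam := by
  have hn0 : (0:ℝ) < n := by exact_mod_cast hn1
  set B : Finset (VH → VG) := univ.filter
    (fun σ : VH → VG =>
      (∀ a b, H.Adj a b → G.Adj (σ a) (σ b)) ∧ Function.Injective σ) with hB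
  set A : Finset (VH → VG) := univ.filter
    (fun σ : VH → VG =>
      ((∀ a b, H.Adj a b → G.Adj (σ a) (σ b)) ∧ Function.Injective σ) ∧
      ∀ u : VH, (1 < T.degree u ∨ u = o) → G.degree (σ u) < Δ) with hA
  set I : Finset VH := univ.filter (fun y : VH => 1 < T.degree y ∨ y = o) with hI
  set Bad : Finset VG := univ.filter (fun w : VG => Δ ≤ G.degree w) with hBad
  set K : ℕ := ∑ w ∈ Bad, (G.degree w) ^ (h - 1) with hK
  -- the sum of the Xbar equals the cardinality of A
  have hXsum : ∑ v : VG, Xbar v = A.card := by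
    rw [Finset.card_eq_sum_card_fiberwise
      (f := fun σ : VH → VG => σ o) (t := (univ : Finset VG)) (fun σ _ => mem_univ _)]
    refine Finset.sum_congr rfl fun v _ => ?_
    rw [hXbar v]
    congr 1
    ext σ
    simp only [hA, Finset.mem_filter, Finset.mem_univ, true_and]
    tauto
  have hAB : A ⊆ B := by
    intro σ hσ
    rw [hA, mem_filter] at hσ
    rw [hB, mem_filter]
    exact ⟨hσ.1, hσ.2.1⟩
  have hembB : emb = B.card := hemb
  -- every non-truncated embedding lies in one of the S-sets
  have hFsub : B \ A ⊆ (I ×ˢ Bad).biUnion (fun p : VH × VG =>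
      univ.filter (fun σ : VH → VG => σ p.1 = p.2 ∧
        (∀ a b, T.Adj a b → G.Adj (σ a) (σ b)) ∧
        ∀ y, 1 < T.degree y → G.degree (σ y) ≤ G.degree p.2)) := by
    intro σ hσ
    rw [Finset.mem_sdiff] at hσ
    obtain ⟨hσB, hσA⟩ := hσ
    rw [hB, mem_filter] at hσB
    have hPσ := hσB.2
    have hbad : ∃ y : VH, (1 < T.degree y ∨ y = o) ∧ Δ ≤ G.degree (σ y) := by
      by_contra hcon
      push_neg at hcon
      exact hσA (by rw [hA, mem_filter]; exact ⟨mem_univ _, hPσ, fun y hy => hcon y hy⟩)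
    obtain ⟨y₀, hy₀I, hy₀⟩ := hbad
    have hy₀mem : y₀ ∈ I := by rw [hI, mem_filter]; exact ⟨mem_univ _, hy₀I⟩
    obtain ⟨ustar, huI, humax⟩ := I.exists_max_image (fun y => G.degree (σ y)) ⟨y₀, hy₀mem⟩
    have hustarBad : σ ustar ∈ Bad := by
      rw [hBad, mem_filter]
      exact ⟨mem_univ _, le_trans hy₀ (humax y₀ hy₀mem)⟩
    rw [Finset.mem_biUnion]
    refine ⟨(ustar, σ ustar), Finset.mem_product.mpr ⟨huI, hustarBad⟩, ?_⟩
    rw [mem_filter]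
    refine ⟨mem_univ _, rfl, fun a b hab => hPσ.1 a b (hTle hab), fun y hy => humax y ?_⟩
    rw [hI, mem_filter]; exact ⟨mem_univ _, Or.inl hy⟩
  have hFcard : (B \ A).card ≤ iT * K := by
    calc (B \ A).card
        ≤ ((I ×ˢ Bad).biUnion (fun p : VH × VG =>
            univ.filter (fun σ : VH → VG => σ p.1 = p.2 ∧
              (∀ a b, T.Adj a b → G.Adj (σ a) (σ b)) ∧
              ∀ y, 1 < T.degree y → G.degree (σ y) ≤ G.degree p.2))).card :=
          Finset.card_le_card hFsub
      _ ≤ ∑ p ∈ I ×ˢ Bad, (univ.filter (fun σ : VH → VG => σ p.1 = p.2 ∧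
              (∀ a b, T.Adj a b → G.Adj (σ a) (σ b)) ∧
              ∀ y, 1 < T.degree y → G.degree (σ y) ≤ G.degree p.2)).card :=
          Finset.card_biUnion_le
      _ ≤ ∑ p ∈ I ×ˢ Bad, (G.degree p.2) ^ (h - 1) := by
          refine Finset.sum_le_sum fun p _ => ?_
          have := tree_count T G hTtree.isConnected p.1 p.2 (G.degree p.2) le_rfl
          rwa [hcard] at this
      _ = iT * K := by
          rw [Finset.sum_product, hiT, hK]
          exact Finset.sum_const_nat fun _ _ => rfl
  have hcardB : B.card ≤ A.card + iT * K := by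
    calc B.card ≤ (B \ A).card + A.card := Finset.card_le_card_sdiff_add_card
      _ ≤ iT * K + A.card := Nat.add_le_add_right hFcard _
      _ = A.card + iT * K := Nat.add_comm _ _
  have hXsumR : (∑ v : VG, (Xbar v : ℝ)) = (A.card : ℝ) := by
    rw [← Nat.cast_sum, hXsum]
  have h1 : (∑ v : VG, (Xbar v : ℝ)) ≤ (emb : ℝ) := by
    rw [hXsumR, hembB]
    exact_mod_cast Finset.card_le_card hAB
  have hKn : (K : ℝ) / n ≤ lam := by
    have hKcast : (K : ℝ)
        = ∑ w : VG, if Δ ≤ G.degree w then (G.degree w : ℝ) ^ (h - 1) else 0 := by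
      rw [hK]
      push_cast
      rw [hBad, Finset.sum_filter]
    rw [hKcast]
    exact hexp
  constructor
  · exact (div_le_div_iff_of_pos_right hn0).mpr h1
  · have h2 : (emb : ℝ) ≤ (∑ v : VG, (Xbar v : ℝ)) + iT * K := by
      rw [hXsumR, hembB]
      exact_mod_cast hcardB
    calc (emb : ℝ) / n ≤ ((∑ v : VG, (Xbar v : ℝ)) + iT * K) / n :=
          (div_le_div_iff_of_pos_right hn0).mpr h2
      _ = (∑ v : VG, (Xbar v : ℝ)) / n + iT * ((K : ℝ) / n) := by ring
      _ ≤ (∑ v : VG, (Xbar v : ℝ)) / n + iT * lam := by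
          have hmono : (iT : ℝ) * ((K:ℝ)/n) ≤ iT * lam :=
            mul_le_mul_of_nonneg_left hKn (by positivity)
          linarith
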